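/- Let Δ* ⊂ M*_ℝ ≅ ℝⁿ be a reflexive polytope (a lattice polytope with 0 in its interior whose polar dual is also a lattice polytope), and let C(Δ*) = ℝ≥0 · ({1} × Δ*) ⊂ ℝ × M*_ℝ be the cone over it. Let p ∈ Δ* be a lattice point on a codimension-2 face, assume the tangent cone of Δ* at a rational interior point q of that face is a smooth 2-dimensional cone (intersection of two half-spaces cut out by part of a dual basis). Then there exist lattice points ñ₁, ñ₂ ∈ ∂C(Δ*) ∩ (ℤ × M*) such that: (i) ñᵢ + (0,p) ∉ C(Δ*) for i = 1,2; (ii) ñ₁ + ñ₂ ∉ ∂C(Δ*); (iii) ñ₁ + ñ₂ + (0,p) ∈ ∂C(Δ*). -/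

import Mathlib

/-- A point of `ℝⁿ` with integer coordinates. -/
def IsLatticePoint {n : ℕ} (x : Fin n → ℝ) : Prop := ∀ i, ∃ z : ℤ, x i = (z : ℝ)

/-- The cone `C(Δ) = ℝ≥0·({1} × Δ) ⊂ ℝ × ℝⁿ` over a polytope `Δ`. -/
def coneOver {n : ℕ} (Δ : Set (Fin n → ℝ)) : Set (ℝ × (Fin n → ℝ)) :=
  {z | ∃ t : ℝ, 0 ≤ t ∧ ∃ v ∈ Δ, z = (t, t • v)}

/-- real dot product of an integer covector with a real vector -/
def rdot {n : ℕ} (u : Fin n → ℤ) (x : Fin n → ℝ) : ℝ := ∑ i, (u i : ℝ) * x i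

lemma rdot_add {n : ℕ} (u : Fin n → ℤ) (x y : Fin n → ℝ) :
    rdot u (x + y) = rdot u x + rdot u y := by
  simp [rdot, mul_add, Finset.sum_add_distrib]

lemma rdot_smul {n : ℕ} (u : Fin n → ℤ) (t : ℝ) (x : Fin n → ℝ) :
    rdot u (t • x) = t * rdot u x := by
  simp only [rdot, Pi.smul_apply, smul_eq_mul, Finset.mul_sum]
  exact Finset.sum_congr rfl fun i _ => by ring

lemma rdot_neg {n : ℕ} (u : Fin n → ℤ) (x : Fin n → ℝ) :
    rdot u (-x) = -rdot u x := by
  simp [rdot, Finset.sum_neg_distrib]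

lemma rdot_sub {n : ℕ} (u : Fin n → ℤ) (x y : Fin n → ℝ) :
    rdot u (x - y) = rdot u x - rdot u y := by
  rw [sub_eq_add_neg, rdot_add, rdot_neg]; ring

lemma mem_frontier_of_sep {E : Type*} [NormedAddCommGroup E] [NormedSpace ℝ E]
    {s : Set E} {z v : E} (f : E → ℝ)
    (hlin : ∀ t : ℝ, f (z + t • v) = f z + t * f v)
    (hs : ∀ w ∈ s, 0 ≤ f w) (hz : z ∈ s) (hz0 : f z = 0) (hv : f v < 0) :
    z ∈ frontier s := by
  show z ∈ closure s \ interior s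
  refine ⟨subset_closure hz, fun hint => ?_⟩
  rcases Metric.mem_nhds_iff.mp (mem_interior_iff_mem_nhds.mp hint) with ⟨ε, hε, hball⟩
  set t := ε / (2 * (‖v‖ + 1)) with ht
  have hvn : (0:ℝ) ≤ ‖v‖ := norm_nonneg v
  have htpos : 0 < t := by positivity
  have hmem : z + t • v ∈ s := by
    apply hball
    have hd : dist (z + t • v) z = t * ‖v‖ := by
      rw [dist_eq_norm, add_sub_cancel_left, norm_smul, Real.norm_eq_abs,
        abs_of_pos htpos]
    rw [Metric.mem_ball, hd]
    have h2 : t * (‖v‖ + 1) = ε / 2 := by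
      rw [ht, div_mul_eq_mul_div, div_eq_div_iff (by positivity) (by positivity)]; ring
    nlinarith
  have h0 := hs _ hmem
  rw [hlin, hz0, zero_add] at h0
  nlinarith

open Matrix in
lemma exists_dual_vec {n : ℕ} (hn : 2 ≤ n) (B : Module.Basis (Fin n) ℤ (Fin n → ℤ)) :
    ∃ e : Fin n → ℤ, (∑ i, B ⟨0, by linarith⟩ i * e i = 1) ∧ (∑ i, B ⟨1, by linarith⟩ i * e i = 0) := by
  classical
  set P := (Pi.basisFun ℤ (Fin n)).toMatrix B with hP
  haveI : Invertible P := (Pi.basisFun ℤ (Fin n)).invertibleToMatrix B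
  haveI : Invertible Pᵀ := (Matrix.transposeInvertibleEquivInvertible P).symm inferInstance
  have hPinv : Pᵀ * (Pᵀ)⁻¹ = 1 := Matrix.mul_inv_of_invertible _
  refine ⟨((Pᵀ)⁻¹).mulVec (Pi.single ⟨0, by omega⟩ 1), ?_, ?_⟩
  · have h : Pᵀ.mulVec (((Pᵀ)⁻¹).mulVec (Pi.single ⟨0, by omega⟩ 1)) =
        Pi.single (⟨0, by omega⟩ : Fin n) 1 := by
      rw [Matrix.mulVec_mulVec, hPinv, Matrix.one_mulVec]
    have h0 := congrFun h ⟨0, by omega⟩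
    simpa [Matrix.mulVec, dotProduct, hP, Module.Basis.toMatrix_apply] using h0
  · have h : Pᵀ.mulVec (((Pᵀ)⁻¹).mulVec (Pi.single ⟨0, by omega⟩ 1)) =
        Pi.single (⟨0, by omega⟩ : Fin n) 1 := by
      rw [Matrix.mulVec_mulVec, hPinv, Matrix.one_mulVec]
    have h1 := congrFun h ⟨1, by omega⟩
    have hne : (⟨1, by omega⟩ : Fin n) ≠ ⟨0, by omega⟩ := by
      simp [Fin.ext_iff]
    simpa [Matrix.mulVec, dotProduct, hP, Module.Basis.toMatrix_apply,
      Pi.single_eq_of_ne hne] using h1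

set_option maxHeartbeats 2000000 in
/-- Let `Δ ⊂ ℝⁿ` be a reflexive polytope (a lattice polytope with `0` in its interior whose
polar dual is again a lattice polytope), `p` a lattice point on a codimension-2 face whose
tangent cone at a rational relative-interior point `q` is a smooth 2-dimensional cone (cut
out by two members of a basis of the dual lattice).  Then there are lattice points
`N₁, N₂ ∈ ∂C(Δ) ∩ (ℤ × ℤⁿ)` with `ñᵢ + (0,p) ∉ C(Δ)`, `N₁ + N₂ ∉ ∂C(Δ)`, and
`N₁ + N₂ + (0,p) ∈ ∂C(Δ)`. -/
theorem stmt_12 {n : ℕ} (hn : 2 ≤ n)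
    (Δ : Set (Fin n → ℝ))
    -- `Δ` is a lattice polytope …
    (S : Finset (Fin n → ℝ)) (hSlat : ∀ v ∈ S, IsLatticePoint v)
    (hΔ : Δ = convexHull ℝ (S : Set (Fin n → ℝ)))
    -- … with `0` in its interior …
    (h0 : (0 : Fin n → ℝ) ∈ interior Δ)
    -- … whose polar dual is again a lattice polytope (reflexivity):
    (S' : Finset (Fin n → ℝ)) (hS'lat : ∀ v ∈ S', IsLatticePoint v)
    (hdual : {y : Fin n → ℝ | ∀ x ∈ Δ, ∑ i, x i * y i ≤ 1} =
      convexHull ℝ (S' : Set (Fin n → ℝ)))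
    -- `p` is a lattice point of `Δ` and `q` a rational point of `Δ`:
    (p q : Fin n → ℝ) (hp : p ∈ Δ) (hplat : IsLatticePoint p) (hq : q ∈ Δ)
    (hqrat : ∀ i, ∃ r : ℚ, q i = (r : ℝ))
    -- smoothness: the tangent cone of `Δ` at `q` is cut out by two members `u₁, u₂` of a
    -- basis of the dual lattice:
    (u₁ u₂ : Fin n → ℤ) (B : Module.Basis (Fin n) ℤ (Fin n → ℤ))
    (hu₁ : u₁ = B ⟨0, by omega⟩) (hu₂ : u₂ = B ⟨1, by omega⟩)
    (htc : ∀ x : Fin n → ℝ,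
      (∃ t : ℝ, 0 ≤ t ∧ ∃ y ∈ Δ, x = t • (y - q)) ↔
        (0 ≤ ∑ i, (u₁ i : ℝ) * x i ∧ 0 ≤ ∑ i, (u₂ i : ℝ) * x i))
    -- `p` lies on the codimension-2 face containing `q` in its relative interior
    -- (the locus in `Δ` where both `u₁, u₂` vanish relative to `q`):
    (hpF₁ : ∑ i, (u₁ i : ℝ) * (p i - q i) = 0)
    (hpF₂ : ∑ i, (u₂ i : ℝ) * (p i - q i) = 0) :
    ∃ N₁ N₂ : ℝ × (Fin n → ℝ),
      N₁ ∈ frontier (coneOver Δ) ∧ N₂ ∈ frontier (coneOver Δ) ∧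
      (∃ z : ℤ, N₁.1 = (z : ℝ)) ∧ IsLatticePoint N₁.2 ∧
      (∃ z : ℤ, N₂.1 = (z : ℝ)) ∧ IsLatticePoint N₂.2 ∧
      N₁ + ((0 : ℝ), p) ∉ coneOver Δ ∧
      N₂ + ((0 : ℝ), p) ∉ coneOver Δ ∧
      N₁ + N₂ ∉ frontier (coneOver Δ) ∧
      N₁ + N₂ + ((0 : ℝ), p) ∈ frontier (coneOver Δ) := by
  classical
  have hΔconv : Convex ℝ Δ := by rw [hΔ]; exact convex_convexHull ℝ _
  have h0Δ : (0 : Fin n → ℝ) ∈ Δ := interior_subset h0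
  -- the two supporting inequalities
  have hface : ∀ v ∈ Δ, rdot u₁ q ≤ rdot u₁ v ∧ rdot u₂ q ≤ rdot u₂ v := by
    intro v hv
    have h := (htc (v - q)).mp ⟨1, zero_le_one, v, hv, (one_smul ℝ (v - q)).symm⟩
    have h1 : (0:ℝ) ≤ rdot u₁ (v - q) := h.1
    have h2 : (0:ℝ) ≤ rdot u₂ (v - q) := h.2
    rw [rdot_sub] at h1 h2
    constructor <;> linarith
  -- nonvanishing of u₁, u₂
  have hu₁ne : ∃ i, u₁ i ≠ 0 := by
    have hne : u₁ ≠ 0 := by rw [hu₁]; exact B.ne_zero _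
    exact Function.ne_iff.mp hne
  have hu₂ne : ∃ i, u₂ i ≠ 0 := by
    have hne : u₂ ≠ 0 := by rw [hu₂]; exact B.ne_zero _
    exact Function.ne_iff.mp hne
  -- positivity of sums of squares
  have hssq : ∀ (u : Fin n → ℤ), (∃ i, u i ≠ 0) → 0 < rdot u (fun i => (u i : ℝ)) := by
    rintro u ⟨i0, hi0⟩
    have hcast : ((u i0 : ℝ)) ≠ 0 := Int.cast_ne_zero.mpr hi0
    simp only [rdot]
    exact Finset.sum_pos' (fun i _ => mul_self_nonneg _)
      ⟨i0, Finset.mem_univ _, mul_self_pos.mpr hcast⟩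
  -- the supporting values at q are strictly negative
  have hqneg : ∀ (u : Fin n → ℤ), (∃ i, u i ≠ 0) →
      (∀ v ∈ Δ, rdot u q ≤ rdot u v) → rdot u q < 0 := by
    intro u hune hb
    obtain ⟨ε, hε, hball⟩ := Metric.mem_nhds_iff.mp (mem_interior_iff_mem_nhds.mp h0)
    set uR : Fin n → ℝ := fun i => (u i : ℝ) with huR
    set δ := ε / (2 * (‖uR‖ + 1)) with hδ
    have hvn : (0:ℝ) ≤ ‖uR‖ := norm_nonneg uR
    have hδpos : 0 < δ := by positivity
    have hy : (-δ) • uR ∈ Δ := by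
      apply hball
      rw [Metric.mem_ball, dist_zero_right, norm_smul, Real.norm_eq_abs, abs_neg,
        abs_of_pos hδpos]
      have h2 : δ * (‖uR‖ + 1) = ε / 2 := by rw [hδ, div_mul_eq_mul_div, div_eq_div_iff (by positivity) (by positivity)]; ring
      nlinarith
    have hle := hb _ hy
    rw [rdot_smul] at hle
    have hpos := hssq u hune
    nlinarith
  have hc₁ : rdot u₁ q < 0 := hqneg u₁ hu₁ne (fun v hv => (hface v hv).1)
  have hc₂ : rdot u₂ q < 0 := hqneg u₂ hu₂ne (fun v hv => (hface v hv).2)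
  -- p lies on the face
  have hpc₁ : rdot u₁ p = rdot u₁ q := by
    have h : rdot u₁ (p - q) = 0 := hpF₁
    rw [rdot_sub] at h; linarith
  have hpc₂ : rdot u₂ p = rdot u₂ q := by
    have h : rdot u₂ (p - q) = 0 := hpF₂
    rw [rdot_sub] at h; linarith
  -- dual vector e with u₁·e = 1, u₂·e = 0
  obtain ⟨e, he₁, he₂⟩ := exists_dual_vec hn B
  rw [← hu₁] at he₁
  rw [← hu₂] at he₂
  -- integer coordinates of p
  choose pz hpz using hplat
  set a₁ : ℤ := -∑ i, u₁ i * pz i with ha₁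
  have hA₁ : (a₁ : ℝ) = -rdot u₁ q := by
    rw [ha₁, ← hpc₁]
    push_cast
    simp only [rdot, neg_inj]
    exact Finset.sum_congr rfl fun i _ => by rw [hpz i]
  clear_value a₁
  set v₁ : Fin n → ℝ := fun i => ((a₁ * e i : ℤ) : ℝ) with hv₁def
  set v₂ : Fin n → ℝ := -p - v₁ with hv₂def
  have hv₁d₁ : rdot u₁ v₁ = (a₁ : ℝ) := by
    simp only [rdot, hv₁def]
    push_cast
    have hstep : ∑ i, (u₁ i : ℝ) * ((a₁:ℝ) * (e i : ℝ)) =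
        (a₁ : ℝ) * ∑ i, (u₁ i : ℝ) * (e i : ℝ) := by
      rw [Finset.mul_sum]; exact Finset.sum_congr rfl fun i _ => by ring
    rw [hstep]
    have he₁' : (∑ i, (u₁ i : ℝ) * (e i : ℝ)) = 1 := by
      have : ((∑ i, u₁ i * e i : ℤ) : ℝ) = 1 := by rw [he₁]; norm_num
      push_cast at this; exact this
    rw [he₁']; ring
  have hv₁d₂ : rdot u₂ v₁ = 0 := by
    simp only [rdot, hv₁def]
    push_cast
    have hstep : ∑ i, (u₂ i : ℝ) * ((a₁:ℝ) * (e i : ℝ)) =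
        (a₁ : ℝ) * ∑ i, (u₂ i : ℝ) * (e i : ℝ) := by
      rw [Finset.mul_sum]; exact Finset.sum_congr rfl fun i _ => by ring
    rw [hstep]
    have he₂' : (∑ i, (u₂ i : ℝ) * (e i : ℝ)) = 0 := by
      have : ((∑ i, u₂ i * e i : ℤ) : ℝ) = 0 := by rw [he₂]; norm_num
      push_cast at this; exact this
    rw [he₂']; ring
  have hv₂d₁ : rdot u₁ v₂ = 0 := by
    rw [hv₂def, rdot_sub, rdot_neg, hpc₁, hv₁d₁, hA₁]; ring
  have hv₂d₂ : rdot u₂ v₂ = -rdot u₂ q := by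
    rw [hv₂def, rdot_sub, rdot_neg, hpc₂, hv₁d₂]; ring
  clear_value v₁ v₂
  -- tangent cone memberships
  obtain ⟨t₁, ht₁, y₁, hy₁, hveq₁⟩ : ∃ t : ℝ, 0 ≤ t ∧ ∃ y ∈ Δ, v₁ = t • (y - q) :=
    (htc v₁).mpr ⟨by show (0:ℝ) ≤ rdot u₁ v₁; rw [hv₁d₁, hA₁]; linarith,
      by show (0:ℝ) ≤ rdot u₂ v₁; rw [hv₁d₂]⟩
  obtain ⟨t₂, ht₂, y₂, hy₂, hveq₂⟩ : ∃ t : ℝ, 0 ≤ t ∧ ∃ y ∈ Δ, v₂ = t • (y - q) :=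
    (htc v₂).mpr ⟨by show (0:ℝ) ≤ rdot u₁ v₂; rw [hv₂d₁],
      by show (0:ℝ) ≤ rdot u₂ v₂; rw [hv₂d₂]; linarith⟩
  obtain ⟨t₃, ht₃, y₃, hy₃, hveq₃⟩ :
      ∃ t : ℝ, 0 ≤ t ∧ ∃ y ∈ Δ, -p + (2⁻¹:ℝ) • q = t • (y - q) :=
    (htc (-p + (2⁻¹:ℝ) • q)).mpr
      ⟨by show (0:ℝ) ≤ rdot u₁ (-p + (2⁻¹:ℝ) • q)
          rw [rdot_add, rdot_neg, rdot_smul, hpc₁]; linarith,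
       by show (0:ℝ) ≤ rdot u₂ (-p + (2⁻¹:ℝ) • q)
          rw [rdot_add, rdot_neg, rdot_smul, hpc₂]; linarith⟩
  -- an interior point in the direction -p from q
  set s₀ : ℝ := (t₃ + 1)⁻¹ with hs₀def
  have hs₀pos : 0 < s₀ := by rw [hs₀def]; positivity
  have hs₀inv : s₀ * (t₃ + 1) = 1 := by
    rw [hs₀def]; field_simp
  clear_value s₀
  have hμnn : (0:ℝ) ≤ s₀ * t₃ := by positivity
  have hs₀le : s₀ ≤ 1 := by nlinarith
  have hintpt : q - s₀ • p ∈ interior Δ := by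
    have hp' : p = (2⁻¹:ℝ) • q - t₃ • (y₃ - q) := by
      rw [eq_sub_iff_add_eq, ← hveq₃]; module
    have hb : (0:ℝ) < 1 - s₀/2 := by linarith
    have hsum : s₀ * t₃ + s₀/2 ≤ 1 := by nlinarith
    have hcoef : s₀ * t₃ / (1 - s₀/2) ≤ 1 := (div_le_one hb).mpr (by linarith)
    have hz₁Δ : (1 - s₀ * t₃ / (1 - s₀/2)) • q + (s₀ * t₃ / (1 - s₀/2)) • y₃ ∈ Δ :=
      hΔconv hq hy₃ (by linarith) (by positivity) (by ring)
    have hmem := hΔconv.combo_interior_closure_mem_interior h0 (subset_closure hz₁Δ)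
      (show (0:ℝ) < s₀/2 by positivity) (show (0:ℝ) ≤ 1 - s₀/2 by linarith) (by ring)
    have heq : q - s₀ • p = (s₀/2) • (0 : Fin n → ℝ) +
        (1 - s₀/2) • ((1 - s₀ * t₃ / (1 - s₀/2)) • q + (s₀ * t₃ / (1 - s₀/2)) • y₃) := by
      have hd : (1 - s₀/2) * (s₀ * t₃ / (1 - s₀/2)) = s₀ * t₃ := by
        rw [mul_comm, div_mul_cancel₀ _ hb.ne']
      have hsa : (1 - s₀/2) • ((1 - s₀ * t₃ / (1 - s₀/2)) • q + (s₀ * t₃ / (1 - s₀/2)) • y₃)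
          = ((1 - s₀/2) - s₀ * t₃) • q + (s₀ * t₃) • y₃ := by
        rw [smul_add, smul_smul, smul_smul, mul_sub, mul_one, hd]
      rw [hsa, hp']
      module
    rw [heq]; exact hmem
  -- choice of the integer K
  choose r hr using hqrat
  set kd : ℕ := ∏ i, (r i).den with hkd
  have hkdpos : 0 < kd := Finset.prod_pos (fun i _ => (r i).pos)
  have hkq : ∀ i, ∃ z : ℤ, (kd:ℝ) * q i = z := by
    intro i
    have hdvd : (r i).den ∣ kd := Finset.dvd_prod_of_mem _ (Finset.mem_univ i)
    obtain ⟨c, hc⟩ := hdvd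
    refine ⟨(r i).num * c, ?_⟩
    have hden : ((r i).den : ℝ) ≠ 0 := Nat.cast_ne_zero.mpr (r i).den_nz
    rw [hr i, hc, Rat.cast_def]
    push_cast
    field_simp
  clear_value kd
  obtain ⟨M, hM⟩ := exists_nat_gt (max (max t₁ t₂) (1/(2*s₀)))
  set K : ℕ := kd * M with hK
  have hMK : (M:ℝ) ≤ (K:ℝ) := by
    have h : M ≤ kd * M := Nat.le_mul_of_pos_left M hkdpos
    rw [hK]; exact_mod_cast h
  have hKql : ∀ i, ∃ z : ℤ, (K:ℝ) * q i = z := by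
    intro i
    obtain ⟨z, hz⟩ := hkq i
    refine ⟨M * z, ?_⟩
    rw [hK]
    push_cast
    linear_combination (M:ℝ) * hz
  clear_value K
  have hrs : 1/(2*s₀) ≤ max (max t₁ t₂) (1/(2*s₀)) := le_max_right _ _
  have hMpos : (0:ℝ) < M := lt_of_le_of_lt (le_trans (by positivity) hrs) hM
  have hKpos : (0:ℝ) < K := lt_of_lt_of_le hMpos hMK
  have hKne : ((K:ℝ)) ≠ 0 := ne_of_gt hKpos
  have hKt₁ : t₁ ≤ (K:ℝ) :=
    le_trans (le_trans (le_max_left t₁ t₂) (le_trans (le_max_left _ _) (le_of_lt hM))) hMK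
  have hKt₂ : t₂ ≤ (K:ℝ) :=
    le_trans (le_trans (le_max_right t₁ t₂) (le_trans (le_max_left _ _) (le_of_lt hM))) hMK
  have hKs : 1 < 2 * (K:ℝ) * s₀ := by
    have h1 : 1/(2*s₀) < (K:ℝ) := lt_of_lt_of_le (lt_of_le_of_lt hrs hM) hMK
    rw [div_lt_iff₀ (by positivity)] at h1
    have h2 : (K:ℝ) * (2*s₀) = 2*(K:ℝ)*s₀ := by ring
    linarith
  -- cone bound
  have hbound : ∀ (u : Fin n → ℤ), (∀ v ∈ Δ, rdot u q ≤ rdot u v) →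
      ∀ w ∈ coneOver Δ, w.1 * rdot u q ≤ rdot u w.2 := by
    rintro u hb w ⟨t, ht, v, hv, rfl⟩
    show t * rdot u q ≤ rdot u (t • v)
    rw [rdot_smul]
    exact mul_le_mul_of_nonneg_left (hb v hv) ht
  -- frontier criterion
  have hfr : ∀ (u : Fin n → ℤ), (∃ i, u i ≠ 0) → (∀ v ∈ Δ, rdot u q ≤ rdot u v) →
      ∀ z ∈ coneOver Δ, rdot u z.2 = z.1 * rdot u q → z ∈ frontier (coneOver Δ) := by
    intro u hune hb z hz hz0
    have hvlt : rdot u (fun i => -(u i : ℝ)) < 0 := by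
      have hpos := hssq u hune
      have hneg : rdot u (fun i => -(u i : ℝ)) = - rdot u (fun i => (u i : ℝ)) := by
        rw [show (fun i => -(u i : ℝ)) = -(fun i => (u i : ℝ)) from rfl, rdot_neg]
      linarith
    apply mem_frontier_of_sep (f := fun w => rdot u w.2 - w.1 * rdot u q)
      (v := ((0:ℝ), fun i => -(u i : ℝ)))
    · intro t
      simp only [Prod.fst_add, Prod.snd_add, Prod.smul_fst, Prod.smul_snd, smul_eq_mul,
        mul_zero, add_zero, rdot_add, rdot_smul]
      ring
    · intro w hw
      have := hbound u hb w hw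
      linarith
    · exact hz
    · show rdot u z.2 - z.1 * rdot u q = 0
      linarith [hz0]
    · show rdot u (fun i => -(u i : ℝ)) - (0:ℝ) * rdot u q < 0
      rw [zero_mul, sub_zero]; exact hvlt
  -- the two lattice points
  refine ⟨((K:ℝ), (K:ℝ) • q + v₁), ((K:ℝ), (K:ℝ) • q + v₂), ?_, ?_, ?_, ?_, ?_, ?_, ?_, ?_, ?_, ?_⟩
  · -- N₁ ∈ frontier
    have hco : (1 : ℝ) - t₁/(K:ℝ) ≥ 0 := by
      have := (div_le_one hKpos).mpr hKt₁; linarith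
    have hmem : ((K:ℝ), (K:ℝ) • q + v₁) ∈ coneOver Δ := by
      refine ⟨(K:ℝ), hKpos.le, (1 - t₁/(K:ℝ)) • q + (t₁/(K:ℝ)) • y₁,
        hΔconv hq hy₁ hco (by positivity) (by ring), ?_⟩
      refine Prod.ext rfl ?_
      have hKt : (K:ℝ) * (t₁/(K:ℝ)) = t₁ := by field_simp
      have hsa : (K:ℝ) • ((1 - t₁/(K:ℝ)) • q + (t₁/(K:ℝ)) • y₁)
          = ((K:ℝ) - (K:ℝ) * (t₁/(K:ℝ))) • q + ((K:ℝ) * (t₁/(K:ℝ))) • y₁ := by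
        rw [smul_add, smul_smul, smul_smul, mul_sub, mul_one]
      rw [hveq₁, hsa, hKt]
      module
    exact hfr u₂ hu₂ne (fun v hv => (hface v hv).2) _ hmem
      (by show rdot u₂ ((K:ℝ) • q + v₁) = (K:ℝ) * rdot u₂ q
          rw [rdot_add, rdot_smul, hv₁d₂]; ring)
  · -- N₂ ∈ frontier
    have hco : (1 : ℝ) - t₂/(K:ℝ) ≥ 0 := by
      have := (div_le_one hKpos).mpr hKt₂; linarith
    have hmem : ((K:ℝ), (K:ℝ) • q + v₂) ∈ coneOver Δ := by
      refine ⟨(K:ℝ), hKpos.le, (1 - t₂/(K:ℝ)) • q + (t₂/(K:ℝ)) • y₂,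
        hΔconv hq hy₂ hco (by positivity) (by ring), ?_⟩
      refine Prod.ext rfl ?_
      have hKt : (K:ℝ) * (t₂/(K:ℝ)) = t₂ := by field_simp
      have hsa : (K:ℝ) • ((1 - t₂/(K:ℝ)) • q + (t₂/(K:ℝ)) • y₂)
          = ((K:ℝ) - (K:ℝ) * (t₂/(K:ℝ))) • q + ((K:ℝ) * (t₂/(K:ℝ))) • y₂ := by
        rw [smul_add, smul_smul, smul_smul, mul_sub, mul_one]
      rw [hveq₂, hsa, hKt]
      module
    exact hfr u₁ hu₁ne (fun v hv => (hface v hv).1) _ hmem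
      (by show rdot u₁ ((K:ℝ) • q + v₂) = (K:ℝ) * rdot u₁ q
          rw [rdot_add, rdot_smul, hv₂d₁]; ring)
  · exact ⟨(K:ℤ), by push_cast; ring⟩
  · intro i
    obtain ⟨z, hz⟩ := hKql i
    refine ⟨z + a₁ * e i, ?_⟩
    show (K:ℝ) * q i + v₁ i = _
    rw [hv₁def]
    push_cast
    linarith [hz]
  · exact ⟨(K:ℤ), by push_cast; ring⟩
  · intro i
    obtain ⟨z, hz⟩ := hKql i
    refine ⟨z - pz i - a₁ * e i, ?_⟩
    show (K:ℝ) * q i + v₂ i = _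
    rw [hv₂def, hv₁def]
    simp only [Pi.sub_apply, Pi.neg_apply]
    push_cast
    rw [hpz i]
    push_cast
    linarith [hz]
  · -- N₁ + (0,p) ∉ cone
    intro hmem
    have hb := hbound u₂ (fun v hv => (hface v hv).2) _ hmem
    simp only [Prod.fst_add, Prod.snd_add] at hb
    rw [rdot_add, rdot_add, rdot_smul, hv₁d₂, hpc₂] at hb
    nlinarith
  · -- N₂ + (0,p) ∉ cone
    intro hmem
    have hb := hbound u₁ (fun v hv => (hface v hv).1) _ hmem
    simp only [Prod.fst_add, Prod.snd_add] at hb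
    rw [rdot_add, rdot_add, rdot_smul, hv₂d₁, hpc₁] at hb
    nlinarith
  · -- N₁ + N₂ ∉ frontier
    have hsum2 : ((K:ℝ), (K:ℝ) • q + v₁) + ((K:ℝ), (K:ℝ) • q + v₂) =
        ((2*(K:ℝ) : ℝ), (2*(K:ℝ)) • q - p) := by
      refine Prod.ext (by show (K:ℝ) + (K:ℝ) = _; ring) ?_
      show ((K:ℝ) • q + v₁) + ((K:ℝ) • q + v₂) = _
      rw [hv₂def]; module
    rw [hsum2]
    have hint : ((2*(K:ℝ) : ℝ), (2*(K:ℝ)) • q - p) ∈ interior (coneOver Δ) := by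
      have hUopen : IsOpen ({z : ℝ × (Fin n → ℝ) | 0 < z.1} ∩
          (fun z : ℝ × (Fin n → ℝ) => z.1⁻¹ • z.2) ⁻¹' (interior Δ)) := by
        apply ContinuousOn.isOpen_inter_preimage ?_ ?_ isOpen_interior
        · exact (continuousOn_fst.inv₀ (fun z hz => ne_of_gt hz)).smul continuousOn_snd
        · exact isOpen_lt continuous_const continuous_fst
      have hUsub : ({z : ℝ × (Fin n → ℝ) | 0 < z.1} ∩
          (fun z : ℝ × (Fin n → ℝ) => z.1⁻¹ • z.2) ⁻¹' (interior Δ)) ⊆ coneOver Δ := by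
        rintro z ⟨hz1, hz2⟩
        refine ⟨z.1, le_of_lt hz1, z.1⁻¹ • z.2, interior_subset hz2, ?_⟩
        rw [smul_inv_smul₀ (ne_of_gt hz1)]
      apply interior_maximal hUsub hUopen
      constructor
      · show (0:ℝ) < 2*(K:ℝ); linarith
      · show (2*(K:ℝ))⁻¹ • ((2*(K:ℝ)) • q - p) ∈ interior Δ
        have heq : (2*(K:ℝ))⁻¹ • ((2*(K:ℝ)) • q - p) =
            (1 - (2*(K:ℝ)*s₀)⁻¹) • q + (2*(K:ℝ)*s₀)⁻¹ • (q - s₀ • p) := by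
          have hws : (2*(K:ℝ)*s₀)⁻¹ * s₀ = (2*(K:ℝ))⁻¹ := by
            rw [mul_inv, mul_inv]
            field_simp
          have h1 : (2*(K:ℝ))⁻¹ • ((2*(K:ℝ)) • q) = q :=
            inv_smul_smul₀ (by positivity) q
          have h2 : (1 - (2*(K:ℝ)*s₀)⁻¹) • q + (2*(K:ℝ)*s₀)⁻¹ • (q - s₀ • p)
              = q - ((2*(K:ℝ)*s₀)⁻¹ * s₀) • p := by module
          rw [smul_sub, h1, h2, hws]
        rw [heq]
        have hμpos : (0:ℝ) < (2*(K:ℝ)*s₀)⁻¹ := by positivity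
        have hμle : (2*(K:ℝ)*s₀)⁻¹ ≤ 1 := by
          rw [inv_le_one_iff₀]; right; linarith
        exact hΔconv.combo_closure_interior_mem_interior (subset_closure hq) hintpt
          (by linarith) hμpos (by ring)
    intro hfr'
    exact hfr'.2 hint
  · -- N₁ + N₂ + (0,p) ∈ frontier
    have hsum3 : ((K:ℝ), (K:ℝ) • q + v₁) + ((K:ℝ), (K:ℝ) • q + v₂) + ((0:ℝ), p) =
        ((2*(K:ℝ) : ℝ), (2*(K:ℝ)) • q) := by
      refine Prod.ext (by show (K:ℝ) + (K:ℝ) + 0 = _; ring) ?_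
      show (((K:ℝ) • q + v₁) + ((K:ℝ) • q + v₂)) + p = _
      rw [hv₂def]; module
    rw [hsum3]
    refine hfr u₁ hu₁ne (fun v hv => (hface v hv).1) _
      ⟨2*(K:ℝ), by linarith, q, hq, rfl⟩ ?_
    show rdot u₁ ((2*(K:ℝ)) • q) = (2*(K:ℝ)) * rdot u₁ q
    rw [rdot_smul]
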